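/- If f: ℝ → (0,∞) is continuous, then WTV(f) = TV(log f), where WTV(f) = 2·sup over finite increasing tuples of Σⱼ |f(xⱼ)−f(xⱼ₋₁)|/(f(xⱼ)+f(xⱼ₋₁)) and TV denotes total variation. -/

import Mathlib

open scoped ENNReal

noncomputable def tvSum (g : ℝ → ℝ) (n : ℕ) (x : Fin (n + 1) → ℝ) : ℝ :=
  ∑ j : Fin n, |g (x j.succ) - g (x j.castSucc)|

noncomputable def TV (g : ℝ → ℝ) : ℝ≥0∞ :=
  ⨆ (n : ℕ) (x : { x : Fin (n + 1) → ℝ // StrictMono x }),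
    ENNReal.ofReal (tvSum g n x.1)

noncomputable def wtvSum (f : ℝ → ℝ) (n : ℕ) (x : Fin (n + 1) → ℝ) : ℝ :=
  2 * ∑ j : Fin n, |f (x j.succ) - f (x j.castSucc)| / (f (x j.succ) + f (x j.castSucc))

noncomputable def WTV (f : ℝ → ℝ) : ℝ≥0∞ :=
  ⨆ (n : ℕ) (x : { x : Fin (n + 1) → ℝ // StrictMono x }),
    ENNReal.ofReal (wtvSum f n x.1)

lemma aux_log_lower {t : ℝ} (ht : 1 ≤ t) : 2 * (t - 1) / (t + 1) ≤ Real.log t := by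
  have key : MonotoneOn (fun t : ℝ => Real.log t + 4 / (t + 1)) (Set.Ici 1) := by
    apply monotoneOn_of_hasDerivWithinAt_nonneg (convex_Ici 1)
      (f' := fun t => 1 / t - 4 / (t + 1) ^ 2)
    · apply ContinuousOn.add
      · exact Real.continuousOn_log.mono (by intro s hs; simp at hs ⊢; intro h; linarith)
      · apply ContinuousOn.div continuousOn_const (by fun_prop)
        intro s hs; simp at hs; intro h; linarith
    · intro s hs
      rw [interior_Ici] at hs
      simp only [Set.mem_Ioi] at hs
      have h1 : s ≠ 0 := by linarith
      have h2 : s + 1 ≠ 0 := by linarith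
      have hd : HasDerivAt (fun t : ℝ => Real.log t + 4 / (t + 1))
          (1 / s - 4 / (s + 1) ^ 2) s := by
        have hlog := Real.hasDerivAt_log h1
        have hinv : HasDerivAt (fun t : ℝ => (t + 1)⁻¹) (-((1:ℝ) / (s + 1) ^ 2)) s := by
          have := ((hasDerivAt_id s).add_const 1).inv h2
          exact this.congr_deriv (by simp [neg_div])
        have h3 := hlog.add ((hinv.const_mul (4:ℝ)))
        have he : (fun t : ℝ => Real.log t + 4 / (t + 1))
            = fun t : ℝ => Real.log t + 4 * (t + 1)⁻¹ := by
          funext t; rw [div_eq_mul_inv]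
        rw [he]
        exact h3.congr_deriv (by ring)
      exact hd.hasDerivWithinAt
    · intro s hs
      rw [interior_Ici] at hs
      simp only [Set.mem_Ioi] at hs
      have h1 : (0:ℝ) < s := by linarith
      have h2 : (0:ℝ) < s + 1 := by linarith
      rw [sub_nonneg, div_le_div_iff₀ (by positivity) h1]
      nlinarith
  have h1 := key (Set.self_mem_Ici) (Set.mem_Ici.2 ht) ht
  simp only [Real.log_one] at h1
  have h2 : (0:ℝ) < t + 1 := by linarith
  have h3 : 4 / (t + 1) * (t + 1) = 4 := div_mul_cancel₀ 4 (by linarith)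
  rw [div_le_iff₀ h2]
  nlinarith [h1]

lemma d_le_of_le {a b : ℝ} (hb : 0 < b) (hba : b ≤ a) :
    2 * (|a - b| / (a + b)) ≤ |Real.log a - Real.log b| := by
  have ha : 0 < a := lt_of_lt_of_le hb hba
  have ht : 1 ≤ a / b := (one_le_div hb).2 hba
  have key := aux_log_lower ht
  rw [Real.log_div (ne_of_gt ha) (ne_of_gt hb)] at key
  have hlog : Real.log b ≤ Real.log a := Real.log_le_log hb hba
  rw [abs_of_nonneg (sub_nonneg.2 hba), abs_of_nonneg (sub_nonneg.2 hlog)]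
  have heq : 2 * (a / b - 1) / (a / b + 1) = 2 * ((a - b) / (a + b)) := by
    rw [mul_div_assoc]
    congr 1
    rw [div_eq_div_iff (by positivity) (by positivity)]
    field_simp
  linarith [heq ▸ key]

lemma d_le {a b : ℝ} (ha : 0 < a) (hb : 0 < b) :
    2 * (|a - b| / (a + b)) ≤ |Real.log a - Real.log b| := by
  rcases le_total b a with h | h
  · exact d_le_of_le hb h
  · rw [abs_sub_comm a b, abs_sub_comm (Real.log a), add_comm]
    exact d_le_of_le ha h

lemma d_ge_of_le {ε a b : ℝ} (hε0 : 0 < ε) (hε1 : ε < 1) (hb : 0 < b) (hba : b ≤ a)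
    (h : |Real.log a - Real.log b| ≤ Real.log ((1 + ε) / (1 - ε))) :
    (1 - ε) * |Real.log a - Real.log b| ≤ 2 * (|a - b| / (a + b)) := by
  have ha : 0 < a := lt_of_lt_of_le hb hba
  have hlog : Real.log b ≤ Real.log a := Real.log_le_log hb hba
  rw [abs_of_nonneg (sub_nonneg.2 hba), abs_of_nonneg (sub_nonneg.2 hlog)] at *
  have hratio : a / b ≤ (1 + ε) / (1 - ε) := by
    rw [← Real.log_le_log_iff (by positivity) (div_pos (by linarith) (by linarith) : (0:ℝ) < (1 + ε) / (1 - ε)),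
      Real.log_div (ne_of_gt ha) (ne_of_gt hb)]
    exact h
  have hab : a * (1 - ε) ≤ b * (1 + ε) := by
    rw [div_le_div_iff₀ hb (by linarith)] at hratio
    linarith
  set A := Real.log a - Real.log b with hA
  have hA0 : 0 ≤ A := by simp [hA]; linarith
  have hAle : A * b ≤ a - b := by
    have := Real.log_le_sub_one_of_pos (show (0:ℝ) < a / b by positivity)
    rw [Real.log_div (ne_of_gt ha) (ne_of_gt hb)] at this
    rw [← le_div_iff₀ hb]
    calc A ≤ a / b - 1 := this
    _ = (a - b)/b := by field_simp
  have h2 : (1 - ε) * (a + b) ≤ 2 * b := by nlinarith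
  have e1 : A * ((1 - ε) * (a + b)) ≤ A * (2 * b) := mul_le_mul_of_nonneg_left h2 hA0
  rw [mul_div_assoc' 2 _ _, le_div_iff₀ (by positivity)]
  nlinarith [e1, hAle]

lemma d_ge {ε a b : ℝ} (hε0 : 0 < ε) (hε1 : ε < 1) (ha : 0 < a) (hb : 0 < b)
    (h : |Real.log a - Real.log b| ≤ Real.log ((1 + ε) / (1 - ε))) :
    (1 - ε) * |Real.log a - Real.log b| ≤ 2 * (|a - b| / (a + b)) := by
  rcases le_total b a with hba | hba
  · exact d_ge_of_le hε0 hε1 hb hba h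
  · rw [abs_sub_comm a b, abs_sub_comm (Real.log a), add_comm]
    rw [abs_sub_comm (Real.log a)] at h
    exact d_ge_of_le hε0 hε1 ha hba h

lemma sum_grouped (F : ℕ → ℝ) (n m : ℕ) :
    ∑ k ∈ Finset.range (n * m), F k
      = ∑ q ∈ Finset.range n, ∑ r ∈ Finset.range m, F (q * m + r) := by
  induction n with
  | zero => simp
  | succ n ih =>
      rw [Finset.sum_range_succ, ← ih, Nat.succ_mul, Finset.sum_range_add]

lemma exists_refined (f : ℝ → ℝ) (hpos : ∀ x, 0 < f x) (hf : Continuous f)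
    (ε : ℝ) (hε0 : 0 < ε) (hε1 : ε < 1) (n : ℕ) (x : Fin (n + 1) → ℝ) (hx : StrictMono x) :
    ∃ (N : ℕ) (y : Fin (N + 1) → ℝ), StrictMono y ∧
      (1 - ε) * tvSum (fun t => Real.log (f t)) n x ≤ wtvSum f N y := by
  set g : ℝ → ℝ := fun t => Real.log (f t) with hgdef
  have hg : Continuous g := continuous_iff_continuousAt.2 fun t =>
    (Real.continuousAt_log (ne_of_gt (hpos t))).comp hf.continuousAt
  set δ : ℝ := Real.log ((1 + ε) / (1 - ε)) with hδdef
  have hδ : 0 < δ := Real.log_pos ((one_lt_div (by linarith)).2 (by linarith))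
  set K : Set ℝ := Set.Icc (x 0) (x (Fin.last n)) with hKdef
  have hUC := isCompact_Icc.uniformContinuousOn_of_continuous
    (s := K) hg.continuousOn
  obtain ⟨η, hη, hmod⟩ := Metric.uniformContinuousOn_iff.1 hUC δ hδ
  set L : ℝ := x (Fin.last n) - x 0 with hLdef
  have hL : 0 ≤ L := sub_nonneg.2 (hx.monotone (Fin.zero_le _))
  obtain ⟨m, hm⟩ := exists_nat_gt (L / η)
  have hm0 : 0 < m := by
    have : (0:ℝ) ≤ L / η := div_nonneg hL hη.le
    exact_mod_cast Nat.cast_pos.1 (lt_of_le_of_lt this hm)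
  have hmR : (0:ℝ) < (m:ℝ) := by exact_mod_cast hm0
  -- extended partition points
  set X : ℕ → ℝ := fun i => x ⟨min i n, by omega⟩ with hXdef
  have hXmono : Monotone X := fun i j hij => hx.monotone (by
    simp only [Fin.mk_le_mk]; omega)
  have hXlt : ∀ q, q < n → X q < X (q + 1) := fun q hq => hx (by
    simp only [Fin.mk_lt_mk]; omega)
  have hXmem : ∀ i, X i ∈ K := fun i =>
    ⟨hx.monotone (Fin.zero_le _), hx.monotone (Fin.le_last _)⟩
  -- the refined points
  set u : ℕ → ℝ := fun k =>
    X (k / m) + ((k % m : ℕ) : ℝ) / m * (X (k / m + 1) - X (k / m)) with hudef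
  have hstep : ∀ k, u (k + 1) - u k = (X (k / m + 1) - X (k / m)) / m := by
    intro k
    have hk : m * (k / m) + k % m = k := Nat.div_add_mod k m
    set q := k / m with hq
    set r := k % m with hr
    have hrm : r < m := Nat.mod_lt _ hm0
    have hcomm : m * q = q * m := Nat.mul_comm m q
    by_cases hc : r + 1 < m
    · have e : k + 1 = (r + 1) + q * m := by omega
      have h1 : (k + 1) / m = q := by
        rw [e, Nat.add_mul_div_right _ _ hm0, Nat.div_eq_of_lt hc, Nat.zero_add]
      have h2 : (k + 1) % m = r + 1 := by
        rw [e, Nat.add_mul_mod_self_right, Nat.mod_eq_of_lt hc]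
      simp only [hudef, h1, h2, ← hq, ← hr]
      push_cast
      field_simp
      ring
    · have hrm1 : r + 1 = m := by omega
      have e : k + 1 = m * (q + 1) := by rw [Nat.mul_succ]; omega
      have h1 : (k + 1) / m = q + 1 := by
        rw [e, Nat.mul_div_cancel_left _ hm0]
      have h2 : (k + 1) % m = 0 := by rw [e, Nat.mul_mod_right]
      have hrv : (r : ℝ) = (m : ℝ) - 1 := by
        have : r = m - 1 := by omega
        rw [this]; push_cast [Nat.one_le_iff_ne_zero.2 (by omega : m ≠ 0)]; ring
      simp only [hudef, h1, h2, ← hq, ← hr, Nat.cast_zero, hrv]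
      field_simp
      ring
  have hqlt : ∀ k, k < n * m → k / m < n := fun k hk =>
    (Nat.div_lt_iff_lt_mul hm0).2 hk
  have hmul : ∀ j, u (j * m) = X j := by
    intro j
    simp only [hudef, Nat.mul_div_cancel _ hm0, Nat.mul_mod_left, Nat.cast_zero,
      zero_div, zero_mul, add_zero]
  have hmem : ∀ k, u k ∈ K := by
    intro k
    have h1 : (0:ℝ) ≤ ((k % m : ℕ) : ℝ) / m := by positivity
    have h2 : ((k % m : ℕ) : ℝ) / m ≤ 1 := by
      rw [div_le_one hmR]
      exact_mod_cast (Nat.mod_lt _ hm0).le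
    have h3 : X (k / m) ≤ X (k / m + 1) := hXmono (by omega)
    have h4 := hXmem (k / m)
    have h5 := hXmem (k / m + 1)
    constructor
    · have : X (k / m) ≤ u k := by
        simp only [hudef]
        nlinarith
      exact le_trans h4.1 this
    · have : u k ≤ X (k / m + 1) := by
        simp only [hudef]
        nlinarith
      exact le_trans this h5.2
  have hgap : ∀ k, dist (u (k + 1)) (u k) < η := by
    intro k
    have h3 : X (k / m) ≤ X (k / m + 1) := hXmono (by omega)
    have hdle : X (k / m + 1) - X (k / m) ≤ L := by
      have h4 := hXmem (k / m)
      have h5 := hXmem (k / m + 1)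
      simp only [hKdef, Set.mem_Icc] at h4 h5
      simp only [hLdef]
      linarith
    rw [Real.dist_eq, hstep k, abs_of_nonneg (div_nonneg (by linarith) hmR.le)]
    rw [div_lt_iff₀ hmR]
    calc X (k / m + 1) - X (k / m) ≤ L := hdle
    _ < η * m := by
      have h := (div_lt_iff₀ hη).1 hm
      nlinarith [mul_comm (m:ℝ) η]
  have hosc : ∀ k, |g (u (k + 1)) - g (u k)| ≤ δ := by
    intro k
    have := hmod (u (k + 1)) (hmem _) (u k) (hmem _) (hgap k)
    rw [Real.dist_eq] at this
    exact this.le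
  -- the refined partition
  refine ⟨n * m, fun k => u k.val, ?_, ?_⟩
  · rw [Fin.strictMono_iff_lt_succ]
    intro i
    have h1 : (i.castSucc : Fin (n * m + 1)).val = i.val := rfl
    have h2 : (i.succ : Fin (n * m + 1)).val = i.val + 1 := rfl
    rw [h1, h2, ← sub_pos, hstep i.val]
    have := hXlt _ (hqlt i.val i.isLt)
    exact div_pos (by linarith) hmR
  · -- sum inequality
    have hwt : wtvSum f (n * m) (fun k => u k.val)
        = 2 * ∑ k ∈ Finset.range (n * m),
            |f (u (k + 1)) - f (u k)| / (f (u (k + 1)) + f (u k)) := by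
      rw [wtvSum]
      congr 1
      rw [← Fin.sum_univ_eq_sum_range
        (fun k => |f (u (k + 1)) - f (u k)| / (f (u (k + 1)) + f (u k)))]
      apply Finset.sum_congr rfl
      intro j _
      rw [Fin.val_succ, Fin.coe_castSucc]
    have htv : tvSum g n x = ∑ q ∈ Finset.range n, |g (X (q + 1)) - g (X q)| := by
      rw [tvSum, ← Fin.sum_univ_eq_sum_range (fun q => |g (X (q + 1)) - g (X q)|)]
      apply Finset.sum_congr rfl
      intro j _
      have e1 : x j.succ = X (j.val + 1) := by
        simp only [hXdef]
        congr 1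
        exact Fin.ext (by have := j.isLt; simp only [Fin.val_succ]; omega)
      have e2 : x j.castSucc = X j.val := by
        simp only [hXdef]
        congr 1
        exact Fin.ext (by have := j.isLt; simp only [Fin.coe_castSucc]; omega)
      rw [e1, e2]
    have key1 : ∀ q ∈ Finset.range n, |g (X (q + 1)) - g (X q)|
        ≤ ∑ r ∈ Finset.range m, |g (u (q * m + r + 1)) - g (u (q * m + r))| := by
      intro q _
      have tel : ∑ r ∈ Finset.range m,
          (g (u (q * m + (r + 1))) - g (u (q * m + r)))
          = g (u (q * m + m)) - g (u (q * m + 0)) :=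
        Finset.sum_range_sub (fun r => g (u (q * m + r))) m
      have e1 : u (q * m + m) = X (q + 1) := by
        rw [show q * m + m = (q + 1) * m by ring, hmul]
      have e2 : u (q * m + 0) = X q := by rw [Nat.add_zero, hmul]
      calc |g (X (q + 1)) - g (X q)|
          = |∑ r ∈ Finset.range m, (g (u (q * m + (r + 1))) - g (u (q * m + r)))| := by
            rw [tel, e1, e2]
        _ ≤ ∑ r ∈ Finset.range m, |g (u (q * m + (r + 1))) - g (u (q * m + r))| :=
            Finset.abs_sum_le_sum_abs _ _
        _ = ∑ r ∈ Finset.range m, |g (u (q * m + r + 1)) - g (u (q * m + r))| := by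
            apply Finset.sum_congr rfl; intro r _; rw [Nat.add_assoc]
    have key2 : tvSum g n x ≤ ∑ k ∈ Finset.range (n * m), |g (u (k + 1)) - g (u k)| := by
      rw [htv, sum_grouped (fun k => |g (u (k + 1)) - g (u k)|) n m]
      exact Finset.sum_le_sum key1
    have key3 : ∀ k ∈ Finset.range (n * m),
        (1 - ε) * |g (u (k + 1)) - g (u k)|
          ≤ 2 * (|f (u (k + 1)) - f (u k)| / (f (u (k + 1)) + f (u k))) := by
      intro k _
      exact d_ge hε0 hε1 (hpos _) (hpos _) (hosc k)
    calc (1 - ε) * tvSum g n x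
        ≤ (1 - ε) * ∑ k ∈ Finset.range (n * m), |g (u (k + 1)) - g (u k)| := by
          apply mul_le_mul_of_nonneg_left key2 (by linarith)
      _ = ∑ k ∈ Finset.range (n * m), (1 - ε) * |g (u (k + 1)) - g (u k)| := by
          rw [Finset.mul_sum]
      _ ≤ ∑ k ∈ Finset.range (n * m),
            2 * (|f (u (k + 1)) - f (u k)| / (f (u (k + 1)) + f (u k))) :=
          Finset.sum_le_sum key3
      _ = wtvSum f (n * m) (fun k => u k.val) := by
          rw [hwt, Finset.mul_sum]

theorem wtv_eq_tv_log_of_continuous (f : ℝ → ℝ)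
    (hpos : ∀ x, 0 < f x) (hf : Continuous f) :
    WTV f = TV (fun x => Real.log (f x)) := by
  set g : ℝ → ℝ := fun t => Real.log (f t) with hgdef
  apply le_antisymm
  · -- WTV ≤ TV
    refine iSup_le fun n => iSup_le fun x => ?_
    have h1 : wtvSum f n x.1 ≤ tvSum g n x.1 := by
      rw [wtvSum, tvSum, Finset.mul_sum]
      refine Finset.sum_le_sum fun j _ => ?_
      exact d_le (hpos _) (hpos _)
    refine le_trans (ENNReal.ofReal_le_ofReal h1) ?_
    exact le_iSup_of_le n (le_iSup_of_le x le_rfl)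
  · -- TV ≤ WTV
    refine iSup_le fun n => iSup_le fun x => ?_
    set T : ℝ := tvSum g n x.1 with hT
    refine le_of_forall_lt fun c hc => ?_
    have hc' : c ≠ ⊤ := (hc.trans_le le_top).ne
    have hT0 : 0 < T := by
      rcases lt_or_ge 0 T with h | h
      · exact h
      · rw [ENNReal.ofReal_eq_zero.2 h] at hc
        exact absurd hc (by simp)
    have hcr : c.toReal < T := (ENNReal.lt_ofReal_iff_toReal_lt hc').1 hc
    have hcr0 : 0 ≤ c.toReal := ENNReal.toReal_nonneg
    clear_value T
    set ε : ℝ := (T - c.toReal) / (2 * T) with hε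
    clear_value ε
    have hε0 : 0 < ε := by
      rw [hε]; exact div_pos (by linarith) (by linarith)
    have hε1 : ε < 1 := by
      rw [hε, div_lt_one (by linarith)]
      linarith
    obtain ⟨N, y, hy, hkey⟩ := exists_refined f hpos hf ε hε0 hε1 n x.1 x.2
    have hlt : c.toReal < wtvSum f N y := by
      have hTne : T ≠ 0 := ne_of_gt hT0
      rw [← hgdef, ← hT] at hkey
      have h2 : (1 - ε) * T = T - (T - c.toReal) / 2 := by
        rw [hε]
        field_simp
      have h3 : c.toReal < (1 - ε) * T := by rw [h2]; linarith
      linarith [hkey]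
    have h4 : c < ENNReal.ofReal (wtvSum f N y) :=
      (ENNReal.lt_ofReal_iff_toReal_lt hc').2 hlt
    refine lt_of_lt_of_le h4 ?_
    exact le_iSup_of_le N (le_iSup_of_le ⟨y, hy⟩ le_rfl)
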